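/- Let T be a tree with positive weights on internal edges and arbitrary real weights on leaf edges, with leaves labeled by a finite set X, and let d(x,y) be the sum of edge weights along the unique path from leaf x to leaf y. Then d satisfies the four-point condition: for all distinct i, j, k, l ∈ X, d(i,j) + d(k,l) ≤ max(d(i,k) + d(j,l), d(i,l) + d(j,k)). -/

import Mathlib

open SimpleGraph

section FourPointAux

variable {V : Type*}

private lemma fp_mem_edges_of_not_reachable {G : SimpleGraph V} {f : Sym2 V} {x y : V}
    (h : ¬ (G.deleteEdges {f}).Reachable x y) (p : G.Walk x y) : f ∈ p.edges := by
  by_contra hf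
  exact h ⟨p.toDeleteEdges {f} fun e he hes => hf (Set.mem_singleton_iff.mp hes ▸ he)⟩

private lemma fp_bridge {G : SimpleGraph V} (hG : G.IsTree) {u v : V} (huv : G.Adj u v) :
    ¬ (G.deleteEdges {s(u,v)}).Reachable u v :=
  (isBridge_iff.mp ((isAcyclic_iff_forall_adj_isBridge.mp hG.2) huv))

private lemma fp_reach_total {G : SimpleGraph V} {u v : V} {x y : V} (p : G.Walk x y)
    (hy : y = u) :
    (G.deleteEdges {s(u,v)}).Reachable x u ∨ (G.deleteEdges {s(u,v)}).Reachable x v := by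
  induction p with
  | nil => subst hy; exact Or.inl (Reachable.refl _)
  | @cons a b c hab q ih =>
    by_cases hse : s(a, b) = s(u, v)
    · rw [Sym2.eq_iff] at hse
      rcases hse with ⟨rfl, rfl⟩ | ⟨rfl, rfl⟩
      · exact Or.inl (Reachable.refl _)
      · exact Or.inr (Reachable.refl _)
    · have hadj : (G.deleteEdges {s(u,v)}).Adj a b := by
        rw [deleteEdges_adj]
        exact ⟨hab, by simpa using hse⟩
      rcases ih hy with h | h
      · exact Or.inl (hadj.reachable.trans h)
      · exact Or.inr (hadj.reachable.trans h)

private lemma fp_not_reachable_of_mem_edges {G : SimpleGraph V} (hG : G.IsTree) {u v : V}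
    (huv : G.Adj u v) :
    ∀ {x y : V} (p : G.Walk x y), p.IsPath → s(u,v) ∈ p.edges →
      ¬ (G.deleteEdges {s(u,v)}).Reachable x y := by
  intro x y p
  induction p with
  | nil => intro _ he; simp at he
  | @cons a b c hab q ih =>
    intro hp he hr
    rw [Walk.edges_cons, List.mem_cons] at he
    have hxq : a ∉ q.support := ((Walk.cons_isPath_iff hab q).mp hp).2
    rcases he with he | he
    · have hq : s(u,v) ∉ q.edges := by
        intro hmem
        rw [he] at hmem
        exact hxq (q.fst_mem_support_of_mem_edges hmem)
      have hby : (G.deleteEdges {s(u,v)}).Reachable b c :=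
        ⟨q.toDeleteEdges {s(u,v)} fun e hee hes => hq (Set.mem_singleton_iff.mp hes ▸ hee)⟩
      have hab' : (G.deleteEdges {s(u,v)}).Reachable a b := hr.trans hby.symm
      rw [Sym2.eq_iff] at he
      rcases he with ⟨rfl, rfl⟩ | ⟨rfl, rfl⟩
      · exact fp_bridge hG huv hab'
      · exact fp_bridge hG huv hab'.symm
    · have hne : s(a,b) ≠ s(u,v) := by
        intro hEq
        rw [← hEq] at he
        exact hxq (q.fst_mem_support_of_mem_edges he)
      have hadj : (G.deleteEdges {s(u,v)}).Adj a b := by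
        rw [deleteEdges_adj]; exact ⟨hab, by simpa using hne⟩
      exact ih hp.of_cons he (hadj.reachable.symm.trans hr)

private lemma fp_mem_edges_iff {G : SimpleGraph V} (hG : G.IsTree) {u v : V}
    (huv : G.Adj u v) {x y : V} (p : G.Walk x y) (hp : p.IsPath) :
    s(u,v) ∈ p.edges ↔ ¬ (G.deleteEdges {s(u,v)}).Reachable x y :=
  ⟨fun he => fp_not_reachable_of_mem_edges hG huv p hp he,
   fun h => fp_mem_edges_of_not_reachable h p⟩

private lemma fp_reach_iff {G' : SimpleGraph V} {u v : V}
    (total : ∀ x, G'.Reachable x u ∨ G'.Reachable x v) (hb : ¬ G'.Reachable u v)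
    (x y : V) : G'.Reachable x y ↔ (G'.Reachable x u ↔ G'.Reachable y u) := by
  constructor
  · intro hxy
    exact ⟨fun hxu => hxy.symm.trans hxu, fun hyu => hxy.trans hyu⟩
  · intro hiff
    rcases total x with hx | hx
    · exact hx.trans (hiff.mp hx).symm
    · rcases total y with hy | hy
      · exact absurd ((hiff.mpr hy).symm.trans hx) hb
      · exact hx.trans hy.symm

private lemma fp_leaf_eq_of_reach {G : SimpleGraph V} [Fintype V] [DecidableRel G.Adj]
    {t u : V} (ht : G.degree t = 1) (htu : G.Adj t u) {x : V}
    (h : (G.deleteEdges {s(t,u)}).Reachable x t) : x = t := by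
  obtain ⟨p⟩ := h.symm
  cases p with
  | nil => rfl
  | @cons _ b _ hadj q =>
    exfalso
    rw [deleteEdges_adj] at hadj
    have hcard : (G.neighborFinset t).card = 1 := ht
    obtain ⟨a, ha⟩ := Finset.card_eq_one.mp hcard
    have hu : u ∈ G.neighborFinset t := (G.mem_neighborFinset t u).mpr htu
    have hbmem : b ∈ G.neighborFinset t := (G.mem_neighborFinset t b).mpr hadj.1
    rw [ha, Finset.mem_singleton] at hu hbmem
    exact hadj.2 (by rw [hbmem, hu]; exact Set.mem_singleton _)

private lemma fp_leaf_key {G : SimpleGraph V} [Fintype V] [DecidableRel G.Adj]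
    (hG : G.IsTree) {t u : V} (ht : G.degree t = 1) (htu : G.Adj t u) :
    ∀ x y : V, x ≠ y →
      ((¬ (G.deleteEdges {s(t,u)}).Reachable x y) ↔ (x = t ∨ y = t)) := by
  intro x y hxy
  set G' := G.deleteEdges {s(t,u)} with hG'
  have hcomp : ∀ z, G'.Reachable z t ↔ z = t := fun z =>
    ⟨fun h => fp_leaf_eq_of_reach ht htu h, fun h => h ▸ Reachable.refl _⟩
  have total : ∀ z, G'.Reachable z t ∨ G'.Reachable z u := fun z => by
    obtain ⟨p⟩ := hG.1.preconnected z t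
    exact fp_reach_total (v := u) p rfl
  constructor
  · intro hnr
    by_contra hc
    push_neg at hc
    have hx : G'.Reachable x u := (total x).resolve_left (fun h => hc.1 ((hcomp x).mp h))
    have hy : G'.Reachable y u := (total y).resolve_left (fun h => hc.2 ((hcomp y).mp h))
    exact hnr (hx.trans hy.symm)
  · intro hc hr
    rcases hc with rfl | rfl
    · exact hxy (((hcomp y).mp hr.symm)).symm
    · exact hxy ((hcomp x).mp hr)

private lemma fp_ite_case {α : Type*} (w : ℝ) (i j k l t : α)
    (hij : i ≠ j) (hik : i ≠ k) (hil : i ≠ l) (hjk : j ≠ k) (hjl : j ≠ l) (hkl : k ≠ l)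
    [Decidable (i = t ∨ j = t)] [Decidable (k = t ∨ l = t)]
    [Decidable (i = t ∨ k = t)] [Decidable (j = t ∨ l = t)] :
    ((if i = t ∨ j = t then w else 0) + if k = t ∨ l = t then w else 0)
      = (if i = t ∨ k = t then w else 0) + if j = t ∨ l = t then w else 0 := by
  by_cases h1 : i = t
  · have h2 : ¬ j = t := fun h => hij (h1.trans h.symm)
    have h3 : ¬ k = t := fun h => hik (h1.trans h.symm)
    have h4 : ¬ l = t := fun h => hil (h1.trans h.symm)
    simp [h1, h2, h3, h4]
  by_cases h2 : j = t
  · have h3 : ¬ k = t := fun h => hjk (h2.trans h.symm)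
    have h4 : ¬ l = t := fun h => hjl (h2.trans h.symm)
    simp [h1, h2, h3, h4]
  by_cases h3 : k = t
  · have h4 : ¬ l = t := fun h => hkl (h3.trans h.symm)
    simp [h1, h2, h3, h4]
  by_cases h4 : l = t
  · simp [h1, h2, h3, h4]
  · simp [h1, h2, h3, h4]

private lemma fp_aux {V : Type*} [Fintype V] (G : SimpleGraph V) [DecidableRel G.Adj]
    (hG : G.IsTree) (w : Sym2 V → ℝ)
    (hw : ∀ e ∈ G.edgeSet, (∀ v ∈ e, G.degree v ≠ 1) → 0 < w e)
    (d : V → V → ℝ)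
    (hd : ∀ (x y : V) (p : G.Walk x y), p.IsPath → d x y = (p.edges.map w).sum)
    (i j k l : V)
    (hij : i ≠ j) (hik : i ≠ k) (hil : i ≠ l) (hjk : j ≠ k) (hjl : j ≠ l) (hkl : k ≠ l)
    (hA : ∀ e ∈ G.edgeSet, ¬((G.deleteEdges {e}).Reachable i k ∧
      (G.deleteEdges {e}).Reachable j l ∧ ¬(G.deleteEdges {e}).Reachable i j)) :
    d i j + d k l ≤ d i k + d j l := by
  classical
  have d_eq : ∀ x y : V,
      d x y = ∑ e ∈ G.edgeFinset, if ¬ (G.deleteEdges {e}).Reachable x y then w e else 0 := by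
    intro x y
    obtain ⟨p₀⟩ := hG.1.preconnected x y
    set p : G.Path x y := p₀.toPath with hp
    rw [hd x y p.1 p.2]
    have hnodup : p.1.edges.Nodup := p.2.isTrail.edges_nodup
    rw [← List.sum_toFinset w hnodup]
    have hfil : G.edgeFinset.filter (· ∈ p.1.edges) = p.1.edges.toFinset := by
      ext e
      simp only [Finset.mem_filter, List.mem_toFinset, mem_edgeFinset]
      exact ⟨fun h => h.2, fun h => ⟨p.1.edges_subset_edgeSet h, h⟩⟩
    rw [← hfil, Finset.sum_filter]
    refine Finset.sum_congr rfl ?_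
    intro e he
    induction e using Sym2.ind with
    | _ u v =>
      have huv : G.Adj u v := (G.mem_edgeSet).mp (mem_edgeFinset.mp he)
      exact if_congr (fp_mem_edges_iff hG huv p.1 p.2) rfl rfl
  rw [d_eq i j, d_eq k l, d_eq i k, d_eq j l, ← Finset.sum_add_distrib,
    ← Finset.sum_add_distrib]
  refine Finset.sum_le_sum ?_
  intro e he
  induction e using Sym2.ind with
  | _ u v =>
    have huv : G.Adj u v := (G.mem_edgeSet).mp (mem_edgeFinset.mp he)
    by_cases hleaf : G.degree u = 1 ∨ G.degree v = 1
    · rcases hleaf with hu | hv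
      · have key := fp_leaf_key hG hu huv
        rw [if_congr (key i j hij) rfl rfl, if_congr (key k l hkl) rfl rfl,
          if_congr (key i k hik) rfl rfl, if_congr (key j l hjl) rfl rfl]
        exact le_of_eq (fp_ite_case (w s(u,v)) i j k l u hij hik hil hjk hjl hkl)
      · have key := fp_leaf_key hG hv huv.symm
        rw [show s(u,v) = s(v,u) from Sym2.eq_swap]
        rw [if_congr (key i j hij) rfl rfl, if_congr (key k l hkl) rfl rfl,
          if_congr (key i k hik) rfl rfl, if_congr (key j l hjl) rfl rfl]
        exact le_of_eq (fp_ite_case (w s(v,u)) i j k l v hij hik hil hjk hjl hkl)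
    · push_neg at hleaf
      have hwpos : 0 < w s(u,v) := by
        refine hw _ ((G.mem_edgeSet).mpr huv) ?_
        intro x hx
        rcases Sym2.mem_iff.mp hx with rfl | rfl
        exacts [hleaf.1, hleaf.2]
      have hnA := hA s(u,v) ((G.mem_edgeSet).mpr huv)
      set G' := G.deleteEdges {s(u,v)} with hG'
      have total : ∀ x, G'.Reachable x u ∨ G'.Reachable x v := fun x => by
        obtain ⟨p⟩ := hG.1.preconnected x u
        exact fp_reach_total (v := v) p rfl
      have hb : ¬ G'.Reachable u v := fp_bridge hG huv
      have rxy : ∀ x y : V, G'.Reachable x y ↔ (G'.Reachable x u ↔ G'.Reachable y u) :=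
        fp_reach_iff total hb
      change ((if ¬G'.Reachable i j then w s(u, v) else 0) + if ¬G'.Reachable k l then w s(u, v) else 0) ≤
        (if ¬G'.Reachable i k then w s(u, v) else 0) + if ¬G'.Reachable j l then w s(u, v) else 0
      by_cases a : G'.Reachable i u <;> by_cases b : G'.Reachable j u <;>
        by_cases c : G'.Reachable k u <;> by_cases e4 : G'.Reachable l u <;>
        simp only [rxy i j, rxy k l, rxy i k, rxy j l, a, b, c, e4] <;>
        simp <;>
        first
          | linarith
          | exact absurd ⟨(rxy i k).mpr (by tauto), (rxy j l).mpr (by tauto),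
              fun hr => by have := (rxy i j).mp hr; tauto⟩ hnA

private lemma fp_compat {V : Type*} (G : SimpleGraph V) (hG : G.IsTree)
    {i j k l : V} {e e' : Sym2 V} (he : e ∈ G.edgeSet) (he' : e' ∈ G.edgeSet)
    (hA : (G.deleteEdges {e}).Reachable i k ∧ (G.deleteEdges {e}).Reachable j l ∧
      ¬(G.deleteEdges {e}).Reachable i j)
    (hB : (G.deleteEdges {e'}).Reachable i l ∧ (G.deleteEdges {e'}).Reachable j k ∧
      ¬(G.deleteEdges {e'}).Reachable i j) : False := by
  classical
  obtain ⟨hik1, hjl1, hij1⟩ := hA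
  obtain ⟨hil2, hjk2, hij2⟩ := hB
  induction e' using Sym2.ind with
  | _ u' v' =>
    have hik2 : ¬ (G.deleteEdges {s(u',v')}).Reachable i k :=
      fun h => hij2 (h.trans hjk2.symm)
    have hjl2 : ¬ (G.deleteEdges {s(u',v')}).Reachable j l :=
      fun h => hij2 (hil2.trans h.symm)
    obtain ⟨p1⟩ := hik1
    obtain ⟨p2⟩ := hjl1
    have hsub : ∀ f ∈ (G.deleteEdges {e}).edgeSet, f ∈ G.edgeSet :=
      fun f hf => edgeSet_mono (deleteEdges_le _) hf
    have h1 : s(u',v') ∈ p1.edges := by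
      have := fp_mem_edges_of_not_reachable hik2
        (p1.transfer G (fun f hf => hsub f (p1.edges_subset_edgeSet hf)))
      rwa [Walk.edges_transfer] at this
    have h2 : s(u',v') ∈ p2.edges := by
      have := fp_mem_edges_of_not_reachable hjl2
        (p2.transfer G (fun f hf => hsub f (p2.edges_subset_edgeSet hf)))
      rwa [Walk.edges_transfer] at this
    have r1 : (G.deleteEdges {e}).Reachable i u' :=
      ⟨p1.takeUntil u' (p1.fst_mem_support_of_mem_edges h1)⟩
    have r2 : (G.deleteEdges {e}).Reachable j u' :=
      ⟨p2.takeUntil u' (p2.fst_mem_support_of_mem_edges h2)⟩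
    exact hij1 (r1.trans r2.symm)

end FourPointAux

/-- a distance function obtained from an edge-weighted tree
(positive weights on internal edges, arbitrary real weights on leaf edges,
`d x y` = sum of the weights along the unique path between leaves `x`,`y`)
satisfies the four-point condition on distinct leaves.  Leaves are the
degree-one vertices. -/
theorem stmt_11 {V : Type*} [Fintype V] (G : SimpleGraph V) [DecidableRel G.Adj]
    (hG : G.IsTree) (w : Sym2 V → ℝ)
    (hw : ∀ e ∈ G.edgeSet, (∀ v ∈ e, G.degree v ≠ 1) → 0 < w e)
    (d : V → V → ℝ)
    (hd : ∀ (x y : V) (p : G.Walk x y), p.IsPath → d x y = (p.edges.map w).sum)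
    (i j k l : V)
    (hi : G.degree i = 1) (hj : G.degree j = 1)
    (hk : G.degree k = 1) (hl : G.degree l = 1)
    (hij : i ≠ j) (hik : i ≠ k) (hil : i ≠ l)
    (hjk : j ≠ k) (hjl : j ≠ l) (hkl : k ≠ l) :
    d i j + d k l ≤ max (d i k + d j l) (d i l + d j k) := by
  classical
  have dsymm : ∀ x y : V, d x y = d y x := by
    intro x y
    obtain ⟨p⟩ := hG.1.preconnected x y
    rw [hd x y p.toPath.1 p.toPath.2,
      hd y x p.toPath.1.reverse p.toPath.2.reverse,
      Walk.edges_reverse, List.map_reverse, List.sum_reverse]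
  by_cases hA : ∃ e ∈ G.edgeSet, (G.deleteEdges {e}).Reachable i k ∧
      (G.deleteEdges {e}).Reachable j l ∧ ¬(G.deleteEdges {e}).Reachable i j
  · obtain ⟨e, he, hAe⟩ := hA
    have hB : ∀ e' ∈ G.edgeSet, ¬((G.deleteEdges {e'}).Reachable i l ∧
        (G.deleteEdges {e'}).Reachable j k ∧ ¬(G.deleteEdges {e'}).Reachable i j) :=
      fun e' he' hBe => fp_compat G hG he he' hAe hBe
    have h := fp_aux G hG w hw d hd i j l k hij hil hik hjl hjk (Ne.symm hkl) hB
    rw [dsymm l k] at h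
    exact le_trans h (le_max_right _ _)
  · have hA' : ∀ e ∈ G.edgeSet, ¬((G.deleteEdges {e}).Reachable i k ∧
        (G.deleteEdges {e}).Reachable j l ∧ ¬(G.deleteEdges {e}).Reachable i j) :=
      fun e he h => hA ⟨e, he, h⟩
    exact le_trans (fp_aux G hG w hw d hd i j k l hij hik hil hjk hjl hkl hA') (le_max_left _ _)
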